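/- Let n ≥ 1 and let β₁,…,β₉ be permutations of {1,…,2n}, at least one of which is connected. Then the lattice functional F(β) := 4|γ_{n,n}⁻¹β₅| + |γ_{n,n}⁻¹β₄| + |γ_{n,n}⁻¹β₆| + 2(|β₁| + |β₃| + |β₄| + |β₆| + |β₇| + |β₉|) + 3(|β₂| + |β₈|) + Σ_{(i,j)∈E} |β_i⁻¹β_j|, where E = {(1,2),(2,3),(4,5),(5,6),(7,8),(8,9),(1,4),(4,7),(2,5),(5,8),(3,6),(6,9)}, satisfies F(β) ≥ 6(2n − 2) + 2. -/

import Mathlib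

/-!
For a permutation `σ` of a finite set of size `m`, `cycleCount σ` is the number of cycles
(fixed points count as cycles) and `permLen σ = m - cycleCount σ` (the minimal number of
transpositions needed to write `σ`).  We model `{1,…,2n}` as `Fin n ⊕ Fin n`, the first
summand being `{1,…,n}` and the second `{n+1,…,2n}`.  `gammaNN n` is the product of the
two `n`-cycles `(1,2,…,n)` and `(n+1,…,2n)`.
-/

/-- The number of cycles of a permutation, where fixed points count as cycles. -/
noncomputable def cycleCount {α : Type*} [Fintype α] [DecidableEq α]
    (σ : Equiv.Perm α) : ℕ :=
  Multiset.card σ.cycleType + (Fintype.card α - σ.support.card)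

/-- `|σ| = m - #(σ)`, the minimal number of transpositions whose product is `σ`. -/
noncomputable def permLen {α : Type*} [Fintype α] [DecidableEq α]
    (σ : Equiv.Perm α) : ℕ :=
  Fintype.card α - cycleCount σ

/-- `γ_{n,n}`: the product of the two `n`-cycles `(1,…,n)` and `(n+1,…,2n)`. -/
def gammaNN (n : ℕ) : Equiv.Perm (Fin n ⊕ Fin n) :=
  Equiv.sumCongr (finRotate n) (finRotate n)

/-- A permutation of `{1,…,2n}` is connected if some cycle of it contains both an
element of `{1,…,n}` and an element of `{n+1,…,2n}`. -/
def IsConnectedPerm {n : ℕ} (β : Equiv.Perm (Fin n ⊕ Fin n)) : Prop :=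
  ∃ a b : Fin n, β.SameCycle (Sum.inl a) (Sum.inr b)

/-- The lattice functional for the 3×3 grid:
`F(β) = 4|γ_{n,n}⁻¹β₅| + |γ_{n,n}⁻¹β₄| + |γ_{n,n}⁻¹β₆|
  + 2(|β₁| + |β₃| + |β₄| + |β₆| + |β₇| + |β₉|) + 3(|β₂| + |β₈|)
  + Σ_{(i,j)∈E} |βᵢ⁻¹βⱼ|` over the twelve grid edges `E`. -/
noncomputable def latticeF {n : ℕ}
    (b₁ b₂ b₃ b₄ b₅ b₆ b₇ b₈ b₉ : Equiv.Perm (Fin n ⊕ Fin n)) : ℕ :=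
  4 * permLen ((gammaNN n)⁻¹ * b₅) + permLen ((gammaNN n)⁻¹ * b₄)
    + permLen ((gammaNN n)⁻¹ * b₆)
    + 2 * (permLen b₁ + permLen b₃ + permLen b₄ + permLen b₆ + permLen b₇ + permLen b₉)
    + 3 * (permLen b₂ + permLen b₈)
    + (permLen (b₁⁻¹ * b₂) + permLen (b₂⁻¹ * b₃) + permLen (b₄⁻¹ * b₅)
      + permLen (b₅⁻¹ * b₆) + permLen (b₇⁻¹ * b₈) + permLen (b₈⁻¹ * b₉)
      + permLen (b₁⁻¹ * b₄) + permLen (b₄⁻¹ * b₇) + permLen (b₂⁻¹ * b₅)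
      + permLen (b₅⁻¹ * b₈) + permLen (b₃⁻¹ * b₆) + permLen (b₆⁻¹ * b₉))


set_option linter.unusedSectionVars false

open Equiv Equiv.Perm Finset

section Infra
variable {α : Type*} [Fintype α] [DecidableEq α]

lemma two_mul_card_cycleType_le (σ : Perm α) :
    2 * Multiset.card σ.cycleType ≤ σ.support.card := by
  rw [← Equiv.Perm.sum_cycleType]
  have := Multiset.card_nsmul_le_sum (s := σ.cycleType) (fun x hx => two_le_of_mem_cycleType hx)
  simpa [smul_eq_mul, mul_comm] using this

lemma permLen_eq (σ : Perm α) :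
    permLen σ = σ.support.card - Multiset.card σ.cycleType := by
  have h1 : σ.support.card ≤ Fintype.card α := Finset.card_le_univ _
  have h2 := two_mul_card_cycleType_le σ
  unfold permLen cycleCount
  omega

lemma permLen_one : permLen (1 : Perm α) = 0 := by
  rw [permLen_eq]; simp [cycleType_one]

lemma one_le_permLen {σ : Perm α} (h : σ ≠ 1) : 1 ≤ permLen σ := by
  have h2 := two_mul_card_cycleType_le σ
  have h3 : 0 < Multiset.card σ.cycleType := card_cycleType_pos.mpr h
  rw [permLen_eq]; omega

lemma permLen_inv (σ : Perm α) : permLen σ⁻¹ = permLen σ := by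
  rw [permLen_eq, permLen_eq, cycleType_inv, support_inv]

lemma permLen_disjoint_mul {σ τ : Perm α} (h : Equiv.Perm.Disjoint σ τ) :
    permLen (σ * τ) = permLen σ + permLen τ := by
  have h2 := two_mul_card_cycleType_le σ
  have h3 := two_mul_card_cycleType_le τ
  rw [permLen_eq, permLen_eq, permLen_eq, h.cycleType_mul, h.card_support_mul]
  simp only [Multiset.card_add]
  omega

lemma permLen_isCycle {σ : Perm α} (h : IsCycle σ) :
    permLen σ + 1 = σ.support.card := by
  have h2 := h.two_le_card_support
  rw [permLen_eq, h.cycleType]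
  simp; omega

lemma sign_eq_permLen (σ : Perm α) : Equiv.Perm.sign σ = (-1) ^ permLen σ := by
  have h2 := two_mul_card_cycleType_le σ
  rw [Equiv.Perm.sign_of_cycleType, permLen_eq]
  have : σ.cycleType.sum + Multiset.card σ.cycleType
      = (σ.cycleType.sum - Multiset.card σ.cycleType) + 2 * Multiset.card σ.cycleType := by
    have := sum_cycleType σ; omega
  rw [this, pow_add, Equiv.Perm.sum_cycleType]
  simp [pow_mul]


section Fact
set_option linter.unusedSectionVars false
variable {α : Type*} [Fintype α] [DecidableEq α]

/-- product of swaps from a list of pairs -/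
def swProd (l : List (α × α)) : Equiv.Perm α :=
  (l.map fun p => Equiv.swap p.1 p.2).prod

@[simp] lemma swProd_nil : swProd ([] : List (α × α)) = 1 := rfl

@[simp] lemma swProd_cons (e : α × α) (l : List (α × α)) :
    swProd (e :: l) = Equiv.swap e.1 e.2 * swProd l := by
  simp [swProd]

lemma swProd_append (l₁ l₂ : List (α × α)) :
    swProd (l₁ ++ l₂) = swProd l₁ * swProd l₂ := by
  simp [swProd]

lemma isCycle_swap_list_aux :
    ∀ k (σ : Equiv.Perm α), IsCycle σ → σ.support.card ≤ k →
    ∃ l : List (α × α), (∀ p ∈ l, p.1 ≠ p.2) ∧ swProd l = σ ∧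
      l.length + 1 = σ.support.card := by
  intro k
  induction k with
  | zero => intro σ h hk; exact absurd h.two_le_card_support (by omega)
  | succ k ih =>
    intro σ h hk
    obtain ⟨x, hx, -⟩ := id h
    by_cases h1 : σ (σ x) = x
    · have hswap : σ = Equiv.swap x (σ x) := h.eq_swap_of_apply_apply_eq_self hx h1
      refine ⟨[(x, σ x)], ?_, ?_, ?_⟩
      · simpa using Ne.symm hx
      · simp [hswap.symm]
      · rw [hswap, card_support_swap (Ne.symm hx)]; rfl
    · set σ' := Equiv.swap x (σ x) * σ with hσ'
      have hc' : IsCycle σ' := h.swap_mul hx h1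
      have hsupp : σ'.support = σ.support.erase x := by
        rw [hσ', support_swap_mul_eq _ _ h1, Finset.sdiff_singleton_eq_erase]
      have hcard : σ'.support.card + 1 = σ.support.card := by
        rw [hsupp, Finset.card_erase_of_mem (mem_support.2 hx)]
        have : 0 < σ.support.card := Finset.card_pos.2 ⟨x, mem_support.2 hx⟩
        omega
      obtain ⟨l, hl1, hl2, hl3⟩ := ih σ' hc' (by omega)
      refine ⟨(x, σ x) :: l, ?_, ?_, ?_⟩
      · intro p hp
        rcases List.mem_cons.1 hp with h' | h'
        · subst h'; exact Ne.symm hx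
        · exact hl1 p h'
      · rw [swProd_cons, hl2, hσ', ← mul_assoc, Equiv.swap_mul_self, one_mul]
      · simp only [List.length_cons]; omega

lemma exists_swap_list (σ : Equiv.Perm α) :
    ∃ l : List (α × α), (∀ p ∈ l, p.1 ≠ p.2) ∧ swProd l = σ ∧
      l.length = permLen σ := by
  induction σ using Equiv.Perm.cycle_induction_on with
  | base_one => exact ⟨[], by simp, by simp, by simp [permLen_one]⟩
  | base_cycles σ hσ =>
    obtain ⟨l, h1, h2, h3⟩ := isCycle_swap_list_aux σ.support.card σ hσ le_rfl
    exact ⟨l, h1, h2, by have := permLen_isCycle hσ; omega⟩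
  | induction_disjoint σ τ hd hc hσ hτ =>
    obtain ⟨l₁, h1, h2, h3⟩ := hσ
    obtain ⟨l₂, g1, g2, g3⟩ := hτ
    refine ⟨l₁ ++ l₂, ?_, ?_, ?_⟩
    · intro p hp; rcases List.mem_append.1 hp with h | h
      · exact h1 p h
      · exact g1 p h
    · rw [swProd_append, h2, g2]
    · rw [List.length_append, permLen_disjoint_mul hd, h3, g3]
end Fact
section Graph
open Relation
variable {α : Type*} [Fintype α] [DecidableEq α]

def pairRel (l : List (α × α)) (x y : α) : Prop := (x, y) ∈ l ∨ (y, x) ∈ l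

abbrev pairSetoid (l : List (α × α)) : Setoid α := EqvGen.setoid (pairRel l)

lemma eqvGen_nil {x y : α} (h : EqvGen (pairRel ([] : List (α × α))) x y) : x = y := by
  induction h with
  | rel a b hab => rcases hab with h' | h' <;> simp at h'
  | refl a => rfl
  | symm a b _ ih => exact ih.symm
  | trans a b c _ _ ih1 ih2 => exact ih1.trans ih2

lemma eqvGen_cons {e : α × α} {l : List (α × α)} {x y : α}
    (h : EqvGen (pairRel (e :: l)) x y) :
    EqvGen (pairRel l) x y ∨
      ((EqvGen (pairRel l) x e.1 ∨ EqvGen (pairRel l) x e.2) ∧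
       (EqvGen (pairRel l) y e.1 ∨ EqvGen (pairRel l) y e.2)) := by
  induction h with
  | rel a b hab =>
    rcases hab with h' | h'
    · rcases List.mem_cons.1 h' with h'' | h''
      · subst h''; right
        exact ⟨Or.inl (EqvGen.refl a), Or.inr (EqvGen.refl b)⟩
      · left; exact EqvGen.rel _ _ (Or.inl h'')
    · rcases List.mem_cons.1 h' with h'' | h''
      · subst h''; right
        exact ⟨Or.inr (EqvGen.refl a), Or.inl (EqvGen.refl b)⟩
      · left; exact EqvGen.rel _ _ (Or.inr h'')
  | refl a => left; exact EqvGen.refl a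
  | symm a b _ ih =>
    rcases ih with h' | ⟨ha, hb⟩
    · left; exact EqvGen.symm _ _ h'
    · right; exact ⟨hb, ha⟩
  | trans a b c _ _ ih1 ih2 =>
    rcases ih1 with h1' | ⟨ha, hb⟩
    · rcases ih2 with h2' | ⟨hb', hc⟩
      · left; exact EqvGen.trans _ _ _ h1' h2'
      · right
        exact ⟨hb'.imp (fun h => EqvGen.trans _ _ _ h1' h)
          (fun h => EqvGen.trans _ _ _ h1' h), hc⟩
    · rcases ih2 with h2' | ⟨hb', hc⟩
      · right
        exact ⟨ha, hb.imp (fun h => EqvGen.trans _ _ _ (EqvGen.symm _ _ h2') h)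
          (fun h => EqvGen.trans _ _ _ (EqvGen.symm _ _ h2') h)⟩
      · right; exact ⟨ha, hc⟩

lemma card_le_length_add (l : List (α × α)) :
    Fintype.card α ≤ l.length + Nat.card (Quotient (pairSetoid l)) := by
  classical
  induction l with
  | nil =>
    have hb : Function.Bijective (Quotient.mk (pairSetoid ([] : List (α × α)))) := by
      constructor
      · intro x y h
        exact eqvGen_nil (Quotient.exact h)
      · intro q; exact Quotient.exists_rep q
    have := Nat.card_eq_of_bijective _ hb
    rw [Nat.card_eq_fintype_card] at this
    omega
  | cons e l ih =>
    have mono : ∀ x y : α, EqvGen (pairRel l) x y → EqvGen (pairRel (e :: l)) x y := by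
      intro x y h
      induction h with
      | rel a b hab => exact EqvGen.rel _ _ (hab.imp (List.mem_cons_of_mem e) (List.mem_cons_of_mem e))
      | refl a => exact EqvGen.refl a
      | symm a b _ ih' => exact EqvGen.symm _ _ ih'
      | trans a b c _ _ ih1 ih2 => exact EqvGen.trans _ _ _ ih1 ih2
    let g : Quotient (pairSetoid l) → Option (Quotient (pairSetoid (e :: l))) := fun x =>
      if x = Quotient.mk (pairSetoid l) e.2 then none
      else some (Quotient.lift (fun a => Quotient.mk (pairSetoid (e :: l)) a)
        (fun a b h => Quotient.sound (mono a b (show EqvGen (pairRel l) a b from h))) x)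
    have hg : ∀ u : α, Quotient.mk (pairSetoid l) u ≠ Quotient.mk (pairSetoid l) e.2 →
        g (Quotient.mk (pairSetoid l) u) = some (Quotient.mk (pairSetoid (e :: l)) u) := by
      intro u hu
      simp only [g, if_neg hu]
      rfl
    have hginj : Function.Injective g := by
      intro x y hxy
      obtain ⟨u, rfl⟩ := Quotient.exists_rep x
      obtain ⟨v, rfl⟩ := Quotient.exists_rep y
      by_cases hx : Quotient.mk (pairSetoid l) u = Quotient.mk (pairSetoid l) e.2
      · by_cases hy : Quotient.mk (pairSetoid l) v = Quotient.mk (pairSetoid l) e.2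
        · rw [hx, hy]
        · rw [hg v hy] at hxy
          simp only [g, if_pos hx] at hxy
          exact absurd hxy (by simp)
      · by_cases hy : Quotient.mk (pairSetoid l) v = Quotient.mk (pairSetoid l) e.2
        · rw [hg u hx] at hxy
          simp only [g, if_pos hy] at hxy
          exact absurd hxy (by simp)
        · rw [hg u hx, hg v hy] at hxy
          have hfe : Quotient.mk (pairSetoid (e :: l)) u = Quotient.mk (pairSetoid (e :: l)) v := Option.some_injective _ hxy
          have huv : EqvGen (pairRel (e :: l)) u v := Quotient.exact hfe
          rcases eqvGen_cons huv with h' | ⟨hu, hv⟩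
          · exact Quotient.sound h'
          · have hu1 : EqvGen (pairRel l) u e.1 := by
              rcases hu with h' | h'
              · exact h'
              · exact absurd (Quotient.sound h') hx
            have hv1 : EqvGen (pairRel l) v e.1 := by
              rcases hv with h' | h'
              · exact h'
              · exact absurd (Quotient.sound h') hy
            exact Quotient.sound (EqvGen.trans _ _ _ hu1 (EqvGen.symm _ _ hv1))
    have hcard : Nat.card (Quotient (pairSetoid l)) ≤ Nat.card (Quotient (pairSetoid (e :: l))) + 1 := by
      have h1 := Nat.card_le_card_of_injective g hginj
      rwa [Finite.card_option] at h1
    simp only [List.length_cons]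
    omega

end Graph
section Reach
open Relation Equiv Equiv.Perm Finset
variable {α : Type*} [Fintype α] [DecidableEq α]
set_option linter.unusedSectionVars false

lemma reach_swProd (l : List (α × α)) (x : α) : EqvGen (pairRel l) x (swProd l x) := by
  induction l generalizing x with
  | nil => simpa using EqvGen.refl x
  | cons e l ih =>
    rw [swProd_cons]
    have h1' : EqvGen (pairRel (e :: l)) x (swProd l x) :=
      Relation.EqvGen.mono (fun a b h => Or.imp (List.mem_cons_of_mem e) (List.mem_cons_of_mem e) h) _ _ (ih x)
    refine EqvGen.trans _ _ _ h1' ?_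
    show EqvGen (pairRel (e :: l)) (swProd l x) (Equiv.swap e.1 e.2 (swProd l x))
    by_cases hy1 : swProd l x = e.1
    · rw [hy1, Equiv.swap_apply_left]
      exact EqvGen.rel _ _ (Or.inl (by simp))
    · by_cases hy2 : swProd l x = e.2
      · rw [hy2, Equiv.swap_apply_right]
        exact EqvGen.rel _ _ (Or.inr (by simp))
      · rw [Equiv.swap_apply_of_ne_of_ne hy1 hy2]
        exact EqvGen.refl _

lemma reach_pow (l : List (α × α)) (k : ℕ) (x : α) :
    EqvGen (pairRel l) x ((swProd l ^ k) x) := by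
  induction k generalizing x with
  | zero => simpa using EqvGen.refl x
  | succ k ih =>
    have h : (swProd l ^ (k + 1)) x = (swProd l ^ k) (swProd l x) := by
      rw [pow_succ, Equiv.Perm.mul_apply]
    rw [h]
    exact EqvGen.trans _ _ _ (reach_swProd l x) (ih (swProd l x))

lemma sameCycle_eqvGen {l : List (α × α)} {x y : α} (h : (swProd l).SameCycle x y) :
    EqvGen (pairRel l) x y := by
  obtain ⟨k, -, rfl⟩ := h.exists_pow_eq'
  exact reach_pow l k x

abbrev scSetoid (σ : Equiv.Perm α) : Setoid α :=
  ⟨σ.SameCycle, ⟨fun x => Equiv.Perm.SameCycle.refl σ x, fun h => h.symm, fun h1 h2 => h1.trans h2⟩⟩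

lemma cycleCount_eq_card_quotient (σ : Equiv.Perm α) :
    cycleCount σ = Nat.card (Quotient (scSetoid σ)) := by
  classical
  let F : α → ({c // c ∈ σ.cycleFactorsFinset} ⊕ {x : α // σ x = x}) := fun x =>
    if h : σ x = x then Sum.inr ⟨x, h⟩
    else Sum.inl ⟨σ.cycleOf x, cycleOf_mem_cycleFactorsFinset_iff.2 (mem_support.2 h)⟩
  have fix_of : ∀ {x y : α}, σ.SameCycle x y → σ x = x → y = x := by
    intro x y hxy hx
    obtain ⟨i, hi⟩ := hxy
    rw [← hi, zpow_apply_eq_self_of_apply_eq_self hx]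
  have hresp : ∀ x y : α, σ.SameCycle x y → F x = F y := by
    intro x y hxy
    by_cases hx : σ x = x
    · rw [fix_of hxy hx]
    · have hy : ¬ σ y = y := fun hy => hx (by rw [fix_of hxy.symm hy]; exact hy)
      simp only [F, dif_neg hx, dif_neg hy]
      exact congrArg Sum.inl (Subtype.ext hxy.cycleOf_eq)
  let G : Quotient (scSetoid σ) → ({c // c ∈ σ.cycleFactorsFinset} ⊕ {x : α // σ x = x}) :=
    Quotient.lift F hresp
  have hG : Function.Bijective G := by
    constructor
    · intro x y hxy
      obtain ⟨u, rfl⟩ := Quotient.exists_rep x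
      obtain ⟨v, rfl⟩ := Quotient.exists_rep y
      have hFuv : F u = F v := hxy
      apply Quotient.sound
      show σ.SameCycle u v
      by_cases hu : σ u = u <;> by_cases hv : σ v = v <;>
        simp only [F, dif_pos, dif_neg, hu, hv] at hFuv
      · rw [show u = v from by simpa using hFuv]
      · simp at hFuv
      · simp at hFuv
      · have hcyc : σ.cycleOf u = σ.cycleOf v := by simpa using hFuv
        have hvmem : v ∈ (σ.cycleOf u).support := by
          rw [hcyc]
          exact mem_support_cycleOf_iff.2 ⟨Equiv.Perm.SameCycle.refl σ v, mem_support.2 hv⟩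
        exact (mem_support_cycleOf_iff.1 hvmem).1
    · intro t
      rcases t with ⟨c, hc⟩ | ⟨x, hx⟩
      · have hne : c.support.Nonempty := by
          have h2 := (mem_cycleFactorsFinset_iff.1 hc).1.two_le_card_support
          exact Finset.card_pos.1 (by omega)
        obtain ⟨x, hxmem⟩ := hne
        have hcx : c = σ.cycleOf x := cycle_is_cycleOf hxmem hc
        have hxs : σ x ≠ x := by
          have := mem_cycleFactorsFinset_support_le hc hxmem
          exact mem_support.1 this
        refine ⟨Quotient.mk _ x, ?_⟩
        show F x = _
        simp only [F, dif_neg hxs]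
        exact congrArg Sum.inl (Subtype.ext hcx.symm)
      · exact ⟨Quotient.mk _ x, by show F x = _; simp only [F, dif_pos hx]⟩
  have hcardeq := Nat.card_eq_of_bijective G hG
  rw [hcardeq, Nat.card_eq_fintype_card, Fintype.card_sum]
  unfold cycleCount
  congr 1
  · rw [Equiv.Perm.cycleType_def, Multiset.card_map]
    simp [Fintype.card_coe]
  · rw [Fintype.card_subtype]
    have : Finset.filter (fun x => σ x = x) Finset.univ = σ.supportᶜ := by
      ext x; simp [Equiv.Perm.mem_support, not_not]
    rw [this, Finset.card_compl]

lemma permLen_mul_le (σ τ : Equiv.Perm α) :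
    permLen (σ * τ) ≤ permLen σ + permLen τ := by
  obtain ⟨l₁, -, hp₁, hl₁⟩ := exists_swap_list σ
  obtain ⟨l₂, -, hp₂, hl₂⟩ := exists_swap_list τ
  have hprod : swProd (l₁ ++ l₂) = σ * τ := by rw [swProd_append, hp₁, hp₂]
  have hcard := card_le_length_add (l₁ ++ l₂)
  have hsurj : Function.Surjective
      (Quotient.map' (fun x => x) (fun x y h => sameCycle_eqvGen (l := l₁ ++ l₂) (hprod ▸ h)) :
        Quotient (scSetoid (σ * τ)) → Quotient (pairSetoid (l₁ ++ l₂))) := by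
    intro q
    obtain ⟨u, rfl⟩ := Quotient.exists_rep q
    exact ⟨Quotient.mk _ u, rfl⟩
  have hle := Nat.card_le_card_of_surjective _ hsurj
  rw [← cycleCount_eq_card_quotient] at hle
  have hlen : (l₁ ++ l₂).length = permLen σ + permLen τ := by
    rw [List.length_append, hl₁, hl₂]
  rw [hlen] at hcard
  unfold permLen at hcard ⊢
  omega

end Reach
def gA (n : ℕ) : Equiv.Perm (Fin n ⊕ Fin n) :=
  Equiv.sumCongr (finRotate n) (1 : Equiv.Perm (Fin n))

def gB (n : ℕ) : Equiv.Perm (Fin n ⊕ Fin n) :=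
  Equiv.sumCongr (1 : Equiv.Perm (Fin n)) (finRotate n)

section Gamma
open Relation Equiv Equiv.Perm Finset Sum
variable {n : ℕ}

lemma rho_moves (h : 2 ≤ n) (a : Fin n) : finRotate n a ≠ a := by
  have := support_finRotate_of_le h
  exact mem_support.1 (by rw [this]; exact Finset.mem_univ a)

lemma rho_sameCycle (h : 2 ≤ n) (a b : Fin n) : (finRotate n).SameCycle a b := by
  obtain ⟨x0, hx0, hx⟩ := isCycle_finRotate_of_le h
  exact (hx (rho_moves h a)).symm.trans (hx (rho_moves h b))

lemma gammaNN_zpow_inl (i : ℤ) (a : Fin n) :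
    ((gammaNN n) ^ i) (Sum.inl a) = Sum.inl ((finRotate n ^ i) a) := by
  have hg : gammaNN n = Equiv.Perm.sumCongrHom _ _ (finRotate n, finRotate n) := rfl
  rw [hg, ← map_zpow]
  simp [Equiv.Perm.sumCongrHom]

lemma gammaNN_zpow_inr (i : ℤ) (a : Fin n) :
    ((gammaNN n) ^ i) (Sum.inr a) = Sum.inr ((finRotate n ^ i) a) := by
  have hg : gammaNN n = Equiv.Perm.sumCongrHom _ _ (finRotate n, finRotate n) := rfl
  rw [hg, ← map_zpow]
  simp [Equiv.Perm.sumCongrHom]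

lemma two_le_of_ne {a b : Fin n} (hab : a ≠ b) : 2 ≤ n := by
  by_contra h
  interval_cases n
  · exact a.elim0
  · exact hab (Subsingleton.elim a b)

lemma gammaNN_sameCycle_inl (a b : Fin n) :
    (gammaNN n).SameCycle (Sum.inl a) (Sum.inl b) := by
  rcases eq_or_ne a b with rfl | hab
  · exact Equiv.Perm.SameCycle.refl _ _
  · obtain ⟨i, hi⟩ := rho_sameCycle (two_le_of_ne hab) a b
    exact ⟨i, by rw [gammaNN_zpow_inl, hi]⟩

lemma gammaNN_sameCycle_inr (a b : Fin n) :
    (gammaNN n).SameCycle (Sum.inr a) (Sum.inr b) := by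
  rcases eq_or_ne a b with rfl | hab
  · exact Equiv.Perm.SameCycle.refl _ _
  · obtain ⟨i, hi⟩ := rho_sameCycle (two_le_of_ne hab) a b
    exact ⟨i, by rw [gammaNN_zpow_inr, hi]⟩

lemma isCycle_gA (h : 2 ≤ n) : Equiv.Perm.IsCycle (gA n) := by
  obtain ⟨x0, hx0, hx⟩ := isCycle_finRotate_of_le h
  refine ⟨Sum.inl x0, by simpa [gA] using hx0, ?_⟩
  intro y hy
  match y with
  | Sum.inr b => exact absurd (by simp [gA]) hy
  | Sum.inl b =>
    have hb : finRotate n b ≠ b := by simpa [gA] using hy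
    obtain ⟨i, hi⟩ := hx hb
    refine ⟨i, ?_⟩
    have hg : gA n = Equiv.Perm.sumCongrHom _ _ (finRotate n, 1) := rfl
    rw [hg, ← map_zpow]
    simpa [Equiv.Perm.sumCongrHom] using congrArg (Sum.inl : Fin n → Fin n ⊕ Fin n) hi

lemma isCycle_gB (h : 2 ≤ n) : Equiv.Perm.IsCycle (gB n) := by
  obtain ⟨x0, hx0, hx⟩ := isCycle_finRotate_of_le h
  refine ⟨Sum.inr x0, by simpa [gB] using hx0, ?_⟩
  intro y hy
  match y with
  | Sum.inl b => exact absurd (by simp [gB]) hy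
  | Sum.inr b =>
    have hb : finRotate n b ≠ b := by simpa [gB] using hy
    obtain ⟨i, hi⟩ := hx hb
    refine ⟨i, ?_⟩
    have hg : gB n = Equiv.Perm.sumCongrHom _ _ (1, finRotate n) := rfl
    rw [hg, ← map_zpow]
    simpa [Equiv.Perm.sumCongrHom] using congrArg (Sum.inr : Fin n → Fin n ⊕ Fin n) hi

lemma support_gA (h : 2 ≤ n) :
    (gA n).support = (Finset.univ : Finset (Fin n)).map ⟨Sum.inl, Sum.inl_injective⟩ := by
  ext x
  match x with
  | Sum.inl a => simpa [Equiv.Perm.mem_support, gA] using rho_moves h a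
  | Sum.inr a => simp [Equiv.Perm.mem_support, gA]

lemma support_gB (h : 2 ≤ n) :
    (gB n).support = (Finset.univ : Finset (Fin n)).map ⟨Sum.inr, Sum.inr_injective⟩ := by
  ext x
  match x with
  | Sum.inl a => simp [Equiv.Perm.mem_support, gB]
  | Sum.inr a => simpa [Equiv.Perm.mem_support, gB] using rho_moves h a

lemma permLen_gammaNN (hn : 1 ≤ n) : permLen (gammaNN n) = 2 * n - 2 := by
  rcases eq_or_lt_of_le hn with h1 | h2
  · have hone : gammaNN n = 1 := by
      subst h1
      rw [gammaNN, finRotate_one]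
      ext x
      cases x <;> simp
    rw [hone, permLen_one, ← h1]
  · have h2 : 2 ≤ n := h2
    have hAB : gammaNN n = gA n * gB n := by
      rw [gA, gB, Equiv.Perm.sumCongr_mul]
      simp [gammaNN]
    have hdisj : Equiv.Perm.Disjoint (gA n) (gB n) := by
      intro x
      match x with
      | Sum.inl a => right; simp [gB]
      | Sum.inr a => left; simp [gA]
    have hA := permLen_isCycle (isCycle_gA h2)
    have hB := permLen_isCycle (isCycle_gB h2)
    rw [support_gA h2, Finset.card_map, Finset.card_univ, Fintype.card_fin] at hA
    rw [support_gB h2, Finset.card_map, Finset.card_univ, Fintype.card_fin] at hB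
    rw [hAB, permLen_disjoint_mul hdisj]
    omega

end Gamma
section Key
open Relation Equiv Equiv.Perm Sum
variable {n : ℕ}

lemma permLen_K0 (hn : 1 ≤ n) (b : Equiv.Perm (Fin n ⊕ Fin n)) :
    2 * n - 2 ≤ permLen b + permLen ((gammaNN n)⁻¹ * b) := by
  have h1 : gammaNN n = b * (b⁻¹ * gammaNN n) := by group
  have h2 := permLen_mul_le b (b⁻¹ * gammaNN n)
  rw [← h1, permLen_gammaNN hn] at h2
  have h3 : permLen ((gammaNN n)⁻¹ * b) = permLen (b⁻¹ * gammaNN n) := by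
    rw [show (gammaNN n)⁻¹ * b = (b⁻¹ * gammaNN n)⁻¹ by simp [mul_inv_rev], permLen_inv]
  omega

lemma permLen_K1 {b : Equiv.Perm (Fin n ⊕ Fin n)} (hb : IsConnectedPerm b) :
    2 * n ≤ permLen b + permLen ((gammaNN n)⁻¹ * b) := by
  classical
  obtain ⟨a0, b0, hab⟩ := hb
  have hn1 : 1 ≤ n := a0.pos
  obtain ⟨l₁, -, hp₁, hl₁⟩ := exists_swap_list b
  obtain ⟨l₂, -, hp₂, hl₂⟩ := exists_swap_list (b⁻¹ * gammaNN n)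
  have hprod : swProd (l₁ ++ l₂) = gammaNN n := by
    rw [swProd_append, hp₁, hp₂]; group
  have hreach : ∀ x y : Fin n ⊕ Fin n, (gammaNN n).SameCycle x y →
      EqvGen (pairRel (l₁ ++ l₂)) x y := by
    intro x y h
    exact sameCycle_eqvGen (by rwa [hprod])
  have hbridge : EqvGen (pairRel (l₁ ++ l₂)) (inl a0) (inr b0) := by
    have h1 : EqvGen (pairRel l₁) (inl a0) (inr b0) := sameCycle_eqvGen (by rwa [hp₁])
    exact Relation.EqvGen.mono (fun a c h =>
      Or.imp (fun hm => List.mem_append_left l₂ hm) (fun hm => List.mem_append_left l₂ hm) h) _ _ h1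
  have hall : ∀ x y : Fin n ⊕ Fin n, EqvGen (pairRel (l₁ ++ l₂)) x y := by
    have key : ∀ x : Fin n ⊕ Fin n, EqvGen (pairRel (l₁ ++ l₂)) x (inr b0) := by
      intro x
      rcases x with a | a
      · exact EqvGen.trans _ _ _ (hreach _ _ (gammaNN_sameCycle_inl a a0)) hbridge
      · exact hreach _ _ (gammaNN_sameCycle_inr a b0)
    intro x y
    exact EqvGen.trans _ _ _ (key x) (EqvGen.symm _ _ (key y))
  have hsub : Nat.card (Quotient (pairSetoid (l₁ ++ l₂))) ≤ 1 := by
    have hss : Subsingleton (Quotient (pairSetoid (l₁ ++ l₂))) := by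
      constructor
      intro q q'
      obtain ⟨u, rfl⟩ := Quotient.exists_rep q
      obtain ⟨v, rfl⟩ := Quotient.exists_rep q'
      exact Quotient.sound (hall u v)
    exact Finite.card_le_one_iff_subsingleton.2 hss
  have hcard := card_le_length_add (l₁ ++ l₂)
  have hlen : (l₁ ++ l₂).length = permLen b + permLen (b⁻¹ * gammaNN n) := by
    rw [List.length_append, hl₁, hl₂]
  have hcardα : Fintype.card (Fin n ⊕ Fin n) = 2 * n := by
    simp [Fintype.card_sum, two_mul]
  have hsign : ((-1 : ℤˣ)) ^ (permLen b + permLen (b⁻¹ * gammaNN n))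
      = (-1 : ℤˣ) ^ (2 * n - 2) := by
    rw [pow_add, ← sign_eq_permLen, ← sign_eq_permLen, ← map_mul]
    rw [show b * (b⁻¹ * gammaNN n) = gammaNN n by group]
    rw [sign_eq_permLen, permLen_gammaNN hn1]
  have heven : Even (2 * n - 2) := ⟨n - 1, by omega⟩
  have hpar : Even (permLen b + permLen (b⁻¹ * gammaNN n)) := by
    by_contra hodd
    rw [Nat.not_even_iff_odd] at hodd
    rw [hodd.neg_one_pow, heven.neg_one_pow] at hsign
    have := congrArg (fun u : ℤˣ => (u : ℤ)) hsign
    simp at this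
  have hperm : permLen ((gammaNN n)⁻¹ * b) = permLen (b⁻¹ * gammaNN n) := by
    rw [show (gammaNN n)⁻¹ * b = (b⁻¹ * gammaNN n)⁻¹ by simp [mul_inv_rev], permLen_inv]
  obtain ⟨k, hk⟩ := hpar
  rw [hcardα, hlen] at hcard
  omega

lemma tri_up {X : Type*} [Fintype X] [DecidableEq X] (a c : Equiv.Perm X) :
    permLen c ≤ permLen a + permLen (a⁻¹ * c) := by
  have h := permLen_mul_le a (a⁻¹ * c)
  rwa [show a * (a⁻¹ * c) = c by group] at h

lemma tri_dn {X : Type*} [Fintype X] [DecidableEq X] (g a c : Equiv.Perm X) :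
    permLen (g⁻¹ * c) ≤ permLen (g⁻¹ * a) + permLen (a⁻¹ * c) := by
  have h := permLen_mul_le (g⁻¹ * a) (a⁻¹ * c)
  rwa [show (g⁻¹ * a) * (a⁻¹ * c) = g⁻¹ * c by group] at h

lemma tri_sym {X : Type*} [Fintype X] [DecidableEq X] (a c : Equiv.Perm X) :
    permLen (a⁻¹ * c) = permLen (c⁻¹ * a) := by
  rw [show a⁻¹ * c = (c⁻¹ * a)⁻¹ by simp [mul_inv_rev], permLen_inv]

end Key

theorem latticeF_connected_ge (n : ℕ) (hn : 1 ≤ n)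
    (b₁ b₂ b₃ b₄ b₅ b₆ b₇ b₈ b₉ : Equiv.Perm (Fin n ⊕ Fin n))
    (hconn : IsConnectedPerm b₁ ∨ IsConnectedPerm b₂ ∨ IsConnectedPerm b₃ ∨
      IsConnectedPerm b₄ ∨ IsConnectedPerm b₅ ∨ IsConnectedPerm b₆ ∨
      IsConnectedPerm b₇ ∨ IsConnectedPerm b₈ ∨ IsConnectedPerm b₉) :
    6 * (2 * n - 2) + 2 ≤ latticeF b₁ b₂ b₃ b₄ b₅ b₆ b₇ b₈ b₉ := by
  have hP1 : 2*n-2 ≤ permLen b₁ + permLen (b₁⁻¹*b₂) + permLen (b₂⁻¹*b₅)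
      + permLen ((gammaNN n)⁻¹*b₅) := by
    have h0 := permLen_K0 hn b₅
    have h1 := tri_up b₂ b₅
    have h2 := tri_up b₁ b₂
    omega
  have hP2 : 2*n-2 ≤ permLen b₃ + permLen (b₃⁻¹*b₆) + permLen (b₅⁻¹*b₆)
      + permLen ((gammaNN n)⁻¹*b₅) := by
    have h0 := permLen_K0 hn b₅
    have h1 := tri_up b₆ b₅
    have hs : permLen (b₆⁻¹*b₅) = permLen (b₅⁻¹*b₆) := tri_sym _ _
    have h2 := tri_up b₃ b₆
    omega
  have hP3 : 2*n-2 ≤ permLen b₇ + permLen (b₇⁻¹*b₈) + permLen (b₅⁻¹*b₈)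
      + permLen ((gammaNN n)⁻¹*b₅) := by
    have h0 := permLen_K0 hn b₅
    have h1 := tri_up b₈ b₅
    have hs : permLen (b₈⁻¹*b₅) = permLen (b₅⁻¹*b₈) := tri_sym _ _
    have h2 := tri_up b₇ b₈
    omega
  have hP4 : 2*n-2 ≤ permLen b₉ + permLen (b₆⁻¹*b₉) + permLen ((gammaNN n)⁻¹*b₆) := by
    have h0 := permLen_K0 hn b₆
    have h1 := tri_up b₉ b₆
    have hs : permLen (b₉⁻¹*b₆) = permLen (b₆⁻¹*b₉) := tri_sym _ _
    omega
  have hP5 : 2*n-2 ≤ permLen b₇ + permLen (b₄⁻¹*b₇) + permLen ((gammaNN n)⁻¹*b₄) := by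
    have h0 := permLen_K0 hn b₄
    have h1 := tri_up b₇ b₄
    have hs : permLen (b₇⁻¹*b₄) = permLen (b₄⁻¹*b₇) := tri_sym _ _
    omega
  have hP6 : 2*n-2 ≤ permLen b₁ + permLen (b₁⁻¹*b₄) + permLen (b₄⁻¹*b₅)
      + permLen ((gammaNN n)⁻¹*b₅) := by
    have h0 := permLen_K0 hn b₅
    have h1 := tri_up b₄ b₅
    have h2 := tri_up b₁ b₄
    omega
  unfold latticeF
  rcases hconn with h|h|h|h|h|h|h|h|h
  · have hK := permLen_K1 h
    have h1 := tri_dn (gammaNN n) b₂ b₁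
    have hs1 : permLen (b₂⁻¹*b₁) = permLen (b₁⁻¹*b₂) := tri_sym _ _
    have h2 := tri_dn (gammaNN n) b₅ b₂
    have hs2 : permLen (b₅⁻¹*b₂) = permLen (b₂⁻¹*b₅) := tri_sym _ _
    omega
  · have hK := permLen_K1 h
    have h1 := tri_up b₁ b₂
    have h2 := tri_dn (gammaNN n) b₅ b₂
    have hs2 : permLen (b₅⁻¹*b₂) = permLen (b₂⁻¹*b₅) := tri_sym _ _
    omega
  · have hK := permLen_K1 h
    have h1 := tri_dn (gammaNN n) b₆ b₃
    have hs1 : permLen (b₆⁻¹*b₃) = permLen (b₃⁻¹*b₆) := tri_sym _ _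
    have h2 := tri_dn (gammaNN n) b₅ b₆
    omega
  · have hK := permLen_K1 h
    have h1 := tri_up b₇ b₄
    have hs1 : permLen (b₇⁻¹*b₄) = permLen (b₄⁻¹*b₇) := tri_sym _ _
    omega
  · have hK := permLen_K1 h
    have h1 := tri_up b₂ b₅
    have h2 := tri_up b₁ b₂
    omega
  · have hK := permLen_K1 h
    have h1 := tri_up b₉ b₆
    have hs1 : permLen (b₉⁻¹*b₆) = permLen (b₆⁻¹*b₉) := tri_sym _ _
    omega
  · have hK := permLen_K1 h
    have h1 := tri_dn (gammaNN n) b₄ b₇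
    omega
  · have hK := permLen_K1 h
    have h1 := tri_up b₇ b₈
    have h2 := tri_dn (gammaNN n) b₅ b₈
    omega
  · have hK := permLen_K1 h
    have h1 := tri_dn (gammaNN n) b₆ b₉
    omega
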